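/- arXiv:2311.17664 — 4 statements merged into one kernel-verified Lean document; each statement's English description precedes it below -/
import Mathlib

section
/- Let S be a 1-stable commutative semiring with exactly L elements and A an n×n matrix over S. Then A^{(k+1)} = A^{(k)} for every k ≥ ⌈2 log₂ L⌉ · n. -/
def IsOneStable (S : Type*) [CommSemiring S] : Prop :=
  ∀ u : S, 1 + u = 1 + u + u ^ 2

section Algebra
variable {S : Type*} [CommSemiring S]

lemma sq_absorb (hS : IsOneStable S) (a r : S) : 1 + a + r + a ^ 2 = 1 + a + r := by
  calc 1 + a + r + a ^ 2 = (1 + a + a ^ 2) + r := by ring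
  _ = (1 + a) + r := by rw [← hS a]

lemma two_ab_absorb (hS : IsOneStable S) (a b : S) : 1 + a + b + 2 * (a * b) = 1 + a + b := by
  have e1 : 1 + a + b + (a ^ 2 + b ^ 2) = 1 + a + b := by
    calc 1 + a + b + (a ^ 2 + b ^ 2) = (1 + a + (b + b ^ 2)) + a ^ 2 := by ring
    _ = 1 + a + (b + b ^ 2) := sq_absorb hS a _
    _ = 1 + b + (a) + b ^ 2 := by ring
    _ = 1 + b + a := sq_absorb hS b a
    _ = 1 + a + b := by ring
  calc 1 + a + b + 2 * (a * b)
      = (1 + a + b + (a ^ 2 + b ^ 2)) + 2 * (a * b) := by rw [e1]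
    _ = 1 + (a + b) + (a + b) ^ 2 := by ring
    _ = 1 + (a + b) := by rw [← hS (a + b)]
    _ = 1 + a + b := by ring

lemma absorbC (hS : IsOneStable S) (a b : S) : 1 + a + b + a * b = 1 + a + b := by
  have h23 : (1 : S) + 1 = 1 + 1 + 1 := by simpa using hS 1
  calc 1 + a + b + a * b = (1 + a + b + 2 * (a * b)) + a * b := by rw [two_ab_absorb hS]
    _ = ((1:S) + 1 + 1) * (a * b) + (1 + a + b) := by ring
    _ = ((1:S) + 1) * (a * b) + (1 + a + b) := by rw [← h23]
    _ = 1 + a + b + 2 * (a * b) := by ring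
    _ = 1 + a + b := two_ab_absorb hS a b

lemma absorb2' (hS : IsOneStable S) (wP wZ c r : S) :
    (r + (wP * wZ + wP * (c * wZ))) + wP * (c * (c * wZ))
      = r + (wP * wZ + wP * (c * wZ)) := by
  calc (r + (wP * wZ + wP * (c * wZ))) + wP * (c * (c * wZ))
      = (1 + c + c ^ 2) * (wP * wZ) + r := by ring
    _ = (1 + c) * (wP * wZ) + r := by rw [← hS c]
    _ = r + (wP * wZ + wP * (c * wZ)) := by ring

lemma absorb3' (hS : IsOneStable S) (wP wZ c₁ c₂ r : S) :
    (r + (wP * wZ + (wP * (c₁ * wZ) + wP * (c₂ * wZ)))) + wP * (c₁ * (c₂ * wZ))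
      = r + (wP * wZ + (wP * (c₁ * wZ) + wP * (c₂ * wZ))) := by
  calc (r + (wP * wZ + (wP * (c₁ * wZ) + wP * (c₂ * wZ)))) + wP * (c₁ * (c₂ * wZ))
      = (1 + c₁ + c₂ + c₁ * c₂) * (wP * wZ) + r := by ring
    _ = (1 + c₁ + c₂) * (wP * wZ) + r := by rw [absorbC hS c₁ c₂]
    _ = r + (wP * wZ + (wP * (c₁ * wZ) + wP * (c₂ * wZ))) := by ring

lemma absorb_finset_sum {β : Type*} [DecidableEq β] {s : S} {T : Finset β} {f : β → S}
    (h : ∀ b ∈ T, s + f b = s) : s + ∑ b ∈ T, f b = s := by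
  induction T using Finset.induction with
  | empty => simp
  | @insert a T' hnb ih =>
    rw [Finset.sum_insert hnb]
    calc s + (f a + ∑ b ∈ T', f b) = (s + ∑ b ∈ T', f b) + f a := by ring
      _ = s + f a := by rw [ih fun b hb => h b (Finset.mem_insert_of_mem hb)]
      _ = s := h a (Finset.mem_insert_self a T')
end Algebra

section Pigeon
variable {α : Type*} [DecidableEq α]

lemma count_split : ∀ (L : List α) (v : α) (m : ℕ), m + 1 ≤ L.count v →
    ∃ P T, L = P ++ v :: T ∧ m ≤ T.count v := by
  intro L
  induction L with
  | nil => intro v m h; simp at h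
  | cons u t ih =>
    intro v m h
    by_cases huv : u = v
    · subst huv
      refine ⟨[], t, rfl, ?_⟩
      rw [List.count_cons_self] at h
      omega
    · rw [List.count_cons_of_ne huv] at h
      obtain ⟨P, T, hPT, hc⟩ := ih v m h
      exact ⟨u :: P, T, by rw [hPT]; rfl, hc⟩

lemma triple_split (L : List α) (v : α) (h : 3 ≤ L.count v) :
    ∃ P X Y Z, L = P ++ v :: (X ++ v :: (Y ++ v :: Z)) := by
  obtain ⟨P, T, rfl, hT⟩ := count_split L v 2 h
  obtain ⟨X, T', rfl, hT'⟩ := count_split T v 1 hT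
  obtain ⟨Y, Z, rfl, _⟩ := count_split T' v 0 hT'
  exact ⟨P, X, Y, Z, rfl⟩

lemma exists_triple_vertex {n : ℕ} (L : List (Fin n)) (hlen : 2 * n < L.length) :
    ∃ v, 3 ≤ L.count v := by
  by_contra hc
  push_neg at hc
  have h1 : L.length = ∑ v : Fin n, L.count v := by
    have h2 : ∑ a ∈ (↑L : Multiset (Fin n)).toFinset, (↑L : Multiset (Fin n)).count a
        = Multiset.card (↑L : Multiset (Fin n)) := Multiset.toFinset_sum_count_eq _
    have h3 : ∑ v : Fin n, (↑L : Multiset (Fin n)).count v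
        = ∑ a ∈ (↑L : Multiset (Fin n)).toFinset, (↑L : Multiset (Fin n)).count a := by
      refine (Finset.sum_subset (Finset.subset_univ _) ?_).symm
      intro x _ hx
      rw [Multiset.count_eq_zero]
      exact fun hmem => hx (Multiset.mem_toFinset.2 hmem)
    simpa using (h3.trans h2).symm
  have h4 : ∑ v : Fin n, L.count v ≤ ∑ _v : Fin n, 2 :=
    Finset.sum_le_sum fun v _ => Nat.lt_succ_iff.mp (hc v)
  simp only [Finset.sum_const, Finset.card_univ, Fintype.card_fin, smul_eq_mul] at h4
  omega

lemma head?_append_cons (P : List α) (v : α) (t t' : List α) :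
    (P ++ v :: t).head? = (P ++ v :: t').head? := by cases P <;> simp

lemma last_red (v : α) (W Z : List α) :
    (v :: (W ++ v :: Z)).getLast? = (v :: Z).getLast? := by
  rw [show v :: (W ++ v :: Z) = (v :: W) ++ v :: Z from rfl, List.getLast?_append_cons]

end Pigeon

section Walks
variable {S : Type*} [CommSemiring S] {n : ℕ} (A : Matrix (Fin n) (Fin n) S)

def wtL : List (Fin n) → S
  | [] => 1
  | [_] => 1
  | u :: v :: t => A u v * wtL (v :: t)

def walks (j : Fin n) : ℕ → Fin n → Finset (List (Fin n))
  | 0, i => if i = j then {[i]} else ∅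
  | (h+1), i => Finset.univ.biUnion fun v => (walks j h v).image (i :: ·)

lemma mem_walks {j : Fin n} : ∀ {h : ℕ} {i : Fin n} {l : List (Fin n)},
    l ∈ walks j h i ↔ l.length = h + 1 ∧ l.head? = some i ∧ l.getLast? = some j := by
  intro h
  induction h with
  | zero =>
    intro i l
    constructor
    · intro hl
      simp only [walks] at hl
      by_cases hij : i = j
      · rw [if_pos hij] at hl
        simp only [Finset.mem_singleton] at hl
        subst hl; subst hij; simp
      · rw [if_neg hij] at hl; exact absurd hl (Finset.notMem_empty _)
    · rintro ⟨h1, h2, h3⟩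
      match l, h1 with
      | [a], _ =>
        simp only [List.head?_cons, Option.some.injEq] at h2
        simp only [List.getLast?_singleton, Option.some.injEq] at h3
        subst h2; subst h3
        simp [walks]
  | succ h ih =>
    intro i l
    simp only [walks, Finset.mem_biUnion, Finset.mem_image, Finset.mem_univ, true_and]
    constructor
    · rintro ⟨v, t, ht, rfl⟩
      obtain ⟨hlen, hhd, hlast⟩ := ih.1 ht
      refine ⟨by simp [hlen], by simp, ?_⟩
      match t, hlen with
      | (x :: t'), _ => simpa using hlast
    · rintro ⟨h1, h2, h3⟩
      match l, h1 with
      | (a :: x :: t'), h1 =>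
        simp only [List.head?_cons, Option.some.injEq] at h2
        subst h2
        refine ⟨x, x :: t', ih.2 ⟨by simpa using h1, rfl, by simpa using h3⟩, rfl⟩

lemma walks_pow : ∀ (h : ℕ) (i j : Fin n), (A ^ h) i j = ∑ l ∈ walks j h i, wtL A l := by
  intro h
  induction h with
  | zero =>
    intro i j
    simp only [pow_zero, Matrix.one_apply, walks]
    by_cases hij : i = j
    · rw [if_pos hij, if_pos hij]; simp [wtL]
    · rw [if_neg hij, if_neg hij]; simp
  | succ h ih =>
    intro i j
    rw [pow_succ', Matrix.mul_apply]
    have hdisj : ∀ v₁ ∈ (Finset.univ : Finset (Fin n)), ∀ v₂ ∈ Finset.univ, v₁ ≠ v₂ →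
        Disjoint ((walks j h v₁).image (i :: ·)) ((walks j h v₂).image (i :: ·)) := by
      intro v₁ _ v₂ _ hne
      rw [Finset.disjoint_left]
      rintro l h1 h2
      simp only [Finset.mem_image] at h1 h2
      obtain ⟨t₁, ht₁, he₁⟩ := h1
      obtain ⟨t₂, ht₂, he₂⟩ := h2
      have e1 := (mem_walks.1 ht₁).2.1
      have e2 := (mem_walks.1 ht₂).2.1
      rw [← he₂] at he₁
      have : t₁ = t₂ := by injection he₁
      rw [this, e2] at e1
      injection e1 with hh
      exact hne hh.symm
    conv_rhs => rw [walks]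
    rw [Finset.sum_biUnion hdisj]
    refine Finset.sum_congr rfl fun v _ => ?_
    rw [Finset.sum_image (by intro a _ b _ hab; injection hab), ih, Finset.mul_sum]
    refine Finset.sum_congr rfl fun t ht => ?_
    obtain ⟨hlen, hhd, _⟩ := mem_walks.1 ht
    match t, hlen with
    | (x :: t'), _ =>
      simp only [List.head?_cons, Option.some.injEq] at hhd
      subst hhd
      simp [wtL]

lemma wtL_splice : ∀ (xs : List (Fin n)) (v : Fin n) (ys : List (Fin n)),
    wtL A (xs ++ v :: ys) = wtL A (xs ++ [v]) * wtL A (v :: ys)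
  | [], v, ys => by simp [wtL]
  | [u], v, ys => by simp [wtL]
  | (u :: u' :: t), v, ys => by
    have := wtL_splice (u' :: t) v ys
    simp only [List.cons_append, List.append_eq, wtL] at *
    rw [this, mul_assoc]

end Walks

section MainLemma
variable {S : Type*} [CommSemiring S] {n : ℕ}

lemma absorb_walk (hS : IsOneStable S) (A : Matrix (Fin n) (Fin n) S) (i j : Fin n)
    (k : ℕ) (hk : 2 * n ≤ k) (Lw : List (Fin n)) (hLw : Lw ∈ walks j (k + 1) i) :
    (∑ l ∈ (Finset.range (k + 1)).biUnion (fun h => walks j h i), wtL A l) + wtL A Lw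
      = ∑ l ∈ (Finset.range (k + 1)).biUnion (fun h => walks j h i), wtL A l := by
  obtain ⟨hlenLw, hheadLw, hlastLw⟩ := mem_walks.1 hLw
  obtain ⟨v, hv⟩ := exists_triple_vertex Lw (by omega)
  obtain ⟨P, X, Y, Z, rfl⟩ := triple_split Lw v hv
  set T := (Finset.range (k + 1)).biUnion (fun h => walks j h i) with hT
  simp only [List.length_append, List.length_cons] at hlenLw
  have hlast : (v :: Z).getLast? = some j := by
    rw [List.getLast?_append_cons, last_red, last_red] at hlastLw; exact hlastLw
  have hhead : ∀ t : List (Fin n), (P ++ v :: t).head? = some i := fun t =>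
    (head?_append_cons P v t _).trans hheadLw
  have hmem0 : (P ++ v :: Z) ∈ T := by
    refine Finset.mem_biUnion.2 ⟨P.length + Z.length, Finset.mem_range.2 (by omega),
      mem_walks.2 ⟨?_, hhead Z, by rw [List.getLast?_append_cons]; exact hlast⟩⟩
    simp only [List.length_append, List.length_cons]; omega
  have hmem1 : (P ++ v :: (X ++ v :: Z)) ∈ T := by
    refine Finset.mem_biUnion.2 ⟨P.length + X.length + Z.length + 1,
      Finset.mem_range.2 (by omega),
      mem_walks.2 ⟨?_, hhead _, by rw [List.getLast?_append_cons, last_red]; exact hlast⟩⟩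
    simp only [List.length_append, List.length_cons]; omega
  have hmem2 : (P ++ v :: (Y ++ v :: Z)) ∈ T := by
    refine Finset.mem_biUnion.2 ⟨P.length + Y.length + Z.length + 1,
      Finset.mem_range.2 (by omega),
      mem_walks.2 ⟨?_, hhead _, by rw [List.getLast?_append_cons, last_red]; exact hlast⟩⟩
    simp only [List.length_append, List.length_cons]; omega
  have hw0 : wtL A (P ++ v :: Z) = wtL A (P ++ [v]) * wtL A (v :: Z) := wtL_splice A P v Z
  have hw1 : wtL A (P ++ v :: (X ++ v :: Z))
      = wtL A (P ++ [v]) * (wtL A ((v :: X) ++ [v]) * wtL A (v :: Z)) := by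
    rw [wtL_splice A P v _, show v :: (X ++ v :: Z) = (v :: X) ++ v :: Z from rfl,
      wtL_splice A (v :: X) v Z]
  have hw2 : wtL A (P ++ v :: (Y ++ v :: Z))
      = wtL A (P ++ [v]) * (wtL A ((v :: Y) ++ [v]) * wtL A (v :: Z)) := by
    rw [wtL_splice A P v _, show v :: (Y ++ v :: Z) = (v :: Y) ++ v :: Z from rfl,
      wtL_splice A (v :: Y) v Z]
  have hwL : wtL A (P ++ v :: (X ++ v :: (Y ++ v :: Z)))
      = wtL A (P ++ [v]) * (wtL A ((v :: X) ++ [v]) *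
          (wtL A ((v :: Y) ++ [v]) * wtL A (v :: Z))) := by
    rw [wtL_splice A P v _,
      show v :: (X ++ v :: (Y ++ v :: Z)) = (v :: X) ++ v :: (Y ++ v :: Z) from rfl,
      wtL_splice A (v :: X) v _,
      show v :: (Y ++ v :: Z) = (v :: Y) ++ v :: Z from rfl,
      wtL_splice A (v :: Y) v Z]
  by_cases hXY : X = Y
  · subst hXY
    have hne01 : (P ++ v :: Z) ≠ (P ++ v :: (X ++ v :: Z)) := fun he => by
      have := congrArg List.length he
      simp only [List.length_append, List.length_cons] at this; omega
    have hsub : ({P ++ v :: Z, P ++ v :: (X ++ v :: Z)} : Finset (List (Fin n))) ⊆ T := by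
      intro l hl
      rcases Finset.mem_insert.1 hl with h | h
      · exact h ▸ hmem0
      · exact (Finset.mem_singleton.1 h) ▸ hmem1
    rw [← Finset.sum_sdiff hsub, Finset.sum_insert (by simpa using hne01),
      Finset.sum_singleton, hw0, hw1, hwL]
    exact absorb2' hS _ _ _ _
  · have hne01 : (P ++ v :: Z) ≠ (P ++ v :: (X ++ v :: Z)) := fun he => by
      have := congrArg List.length he
      simp only [List.length_append, List.length_cons] at this; omega
    have hne02 : (P ++ v :: Z) ≠ (P ++ v :: (Y ++ v :: Z)) := fun he => by
      have := congrArg List.length he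
      simp only [List.length_append, List.length_cons] at this; omega
    have hne12 : (P ++ v :: (X ++ v :: Z)) ≠ (P ++ v :: (Y ++ v :: Z)) := fun he => by
      have hlen : X.length = Y.length := by
        have := congrArg List.length he
        simp only [List.length_append, List.length_cons] at this; omega
      have h2 := List.append_cancel_left he
      have h3 : X ++ v :: Z = Y ++ v :: Z := by injection h2
      exact hXY (List.append_inj_left h3 hlen)
    have hsub : ({P ++ v :: Z, P ++ v :: (X ++ v :: Z), P ++ v :: (Y ++ v :: Z)} :
        Finset (List (Fin n))) ⊆ T := by
      intro l hl
      rcases Finset.mem_insert.1 hl with h | h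
      · exact h ▸ hmem0
      rcases Finset.mem_insert.1 h with h' | h'
      · exact h' ▸ hmem1
      · exact (Finset.mem_singleton.1 h') ▸ hmem2
    rw [← Finset.sum_sdiff hsub,
      Finset.sum_insert (by
        simp only [Finset.mem_insert, Finset.mem_singleton]
        push_neg
        exact ⟨hne01, hne02⟩),
      Finset.sum_insert (by simpa using hne12),
      Finset.sum_singleton, hw0, hw1, hw2, hwL]
    exact absorb3' hS _ _ _ _ _

lemma key_step (hS : IsOneStable S) (A : Matrix (Fin n) (Fin n) S) (k : ℕ) (hk : 2 * n ≤ k) :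
    (∑ h ∈ Finset.range (k + 2), A ^ h) = ∑ h ∈ Finset.range (k + 1), A ^ h := by
  rw [Finset.sum_range_succ]
  ext i j
  rw [Matrix.add_apply]
  have hentry : ∀ m : ℕ, (∑ h ∈ Finset.range m, A ^ h) i j
      = ∑ l ∈ (Finset.range m).biUnion (fun h => walks j h i), wtL A l := by
    intro m
    rw [Matrix.sum_apply]
    rw [Finset.sum_biUnion]
    · exact Finset.sum_congr rfl fun h _ => walks_pow A h i j
    · intro h₁ _ h₂ _ hne
      rw [Function.onFun, Finset.disjoint_left]
      intro l hl₁ hl₂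
      have e1 := (mem_walks.1 hl₁).1
      have e2 := (mem_walks.1 hl₂).1
      omega
  rw [hentry, walks_pow A (k + 1) i j]
  exact absorb_finset_sum fun Lw hLw => absorb_walk hS A i j k hk Lw hLw

end MainLemma

/-- Over a `1`-stable commutative semiring with exactly `L` elements, any `n × n` matrix `A`
satisfies `A^{(k+1)} = A^{(k)}` for every `k ≥ ⌈2 log₂ L⌉ · n`,
where `A^{(m)} = Σ_{h=0}^{m} A^h`. -/
theorem linear_datalog_converges_one_stable (S : Type*) [CommSemiring S] [Fintype S]
    (n L : ℕ) (hL : Fintype.card S = L) (hS : IsOneStable S)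
    (A : Matrix (Fin n) (Fin n) S) (k : ℕ)
    (hk : ⌈(2 * Real.logb 2 L : ℝ)⌉₊ * n ≤ k) :
    (∑ h ∈ Finset.range (k + 2), A ^ h) = (∑ h ∈ Finset.range (k + 1), A ^ h) := by
  by_cases hL1 : L ≤ 1
  · have hcard : Fintype.card S ≤ 1 := by omega
    have hsub : Subsingleton S := Fintype.card_le_one_iff_subsingleton.1 hcard
    ext i j
    exact Subsingleton.elim _ _
  · push_neg at hL1
    have h2L : (2 : ℝ) ≤ (L : ℝ) := by exact_mod_cast hL1
    have hlogb : (1 : ℝ) ≤ Real.logb 2 L := by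
      have := Real.logb_le_logb_of_le (by norm_num : (1:ℝ) < 2) (by norm_num : (0:ℝ) < 2) h2L
      rwa [Real.logb_self_eq_one (by norm_num : (1:ℝ) < 2)] at this
    have hceil : 2 ≤ ⌈(2 * Real.logb 2 L : ℝ)⌉₊ := by
      have h2 : (2 : ℝ) ≤ 2 * Real.logb 2 L := by linarith
      calc 2 = ⌈(2 : ℝ)⌉₊ := by simp
        _ ≤ ⌈(2 * Real.logb 2 L : ℝ)⌉₊ := Nat.ceil_le_ceil h2
    have h2n : 2 * n ≤ k := le_trans (Nat.mul_le_mul_right n hceil) hk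
    exact key_step hS A k h2n
end

section
/- Let S be a naturally ordered commutative semiring in which every chain in the natural order has length at most L. Then for any n×n matrix A over S and any vector x ∈ S^n, there exists k ≤ nL with A^{(k)} x = A^{(k+1)} x, where A^{(m)} = Σ_{h=0}^m A^h. -/
/-- Over a naturally ordered commutative semiring (the relation `x ⪯ y ↔ ∃ z, x + z = y`
is antisymmetric) in which every chain of the natural order has length at most `L`
(no chain with `L+1` strict steps exists), for any `n × n` matrix `A` and any vector `x`
there exists `k ≤ nL` with `A^{(k)} x = A^{(k+1)} x`, where `A^{(m)} = Σ_{h=0}^{m} A^h`. -/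
theorem naturally_ordered_convergence (S : Type*) [CommSemiring S] (L : ℕ)
    (hord : ∀ x y : S, (∃ z, x + z = y) → (∃ z, y + z = x) → x = y)
    (hchain : ¬ ∃ c : Fin (L + 2) → S, ∀ i : Fin (L + 1),
        (∃ z, c i.castSucc + z = c i.succ) ∧ c i.castSucc ≠ c i.succ)
    (n : ℕ) (A : Matrix (Fin n) (Fin n) S) (x : Fin n → S) :
    ∃ k ≤ n * L,
      (∑ h ∈ Finset.range (k + 1), A ^ h).mulVec x
        = (∑ h ∈ Finset.range (k + 2), A ^ h).mulVec x := by
  classical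
  set y : ℕ → Fin n → S := fun m => (∑ h ∈ Finset.range (m + 1), A ^ h).mulVec x with hy
  by_contra hcon
  push_neg at hcon
  have hcon' : ∀ k ≤ n * L, y k ≠ y (k + 1) := hcon
  have hn : 0 < n := by
    by_contra h
    have hn0 : n = 0 := by omega
    subst hn0
    exact hcon' 0 (by simp) (funext fun i => i.elim0)
  have hstep_add : ∀ m : ℕ, y (m + 1) = y m + (A ^ (m + 1)).mulVec x := by
    intro m
    show (∑ h ∈ Finset.range (m + 1 + 1), A ^ h).mulVec x = _
    rw [Finset.sum_range_succ, Matrix.add_mulVec]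
  have hmono : ∀ (i : Fin n) (a b : ℕ), a ≤ b → ∃ z, y a i + z = y b i := by
    intro i a b hab
    induction b, hab using Nat.le_induction with
    | base => exact ⟨0, add_zero _⟩
    | succ b hb ih =>
      obtain ⟨z, hz⟩ := ih
      refine ⟨z + (A ^ (b + 1)).mulVec x i, ?_⟩
      rw [hstep_add b]
      simp [Pi.add_apply, ← hz, add_assoc]
  have hchoose : ∀ k : ℕ, ∃ i : Fin n, k ≤ n * L → y k i ≠ y (k + 1) i := by
    intro k
    by_cases hk : k ≤ n * L
    · have h := hcon' k hk
      rw [Function.ne_iff] at h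
      obtain ⟨i, hi⟩ := h
      exact ⟨i, fun _ => hi⟩
    · exact ⟨⟨0, hn⟩, fun h => absurd h hk⟩
  choose f hf using hchoose
  obtain ⟨i, -, hi⟩ := Finset.exists_lt_card_fiber_of_mul_lt_card_of_maps_to
    (s := Finset.range (n * L + 1)) (t := (Finset.univ : Finset (Fin n))) (f := f)
    (fun a _ => Finset.mem_univ _)
    (show (Finset.univ : Finset (Fin n)).card * L < (Finset.range (n * L + 1)).card by simp)
  set fib := (Finset.range (n * L + 1)).filter (fun k => f k = i) with hfib
  have hcard : L + 1 ≤ fib.card := hi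
  let e : Fin (L + 1) ↪o ℕ := fib.orderEmbOfCardLe hcard
  have hemem : ∀ j : Fin (L + 1), e j ∈ fib := fun j => fib.orderEmbOfCardLe_mem hcard j
  have hestrict : ∀ j : Fin (L + 1), e j ≤ n * L ∧ y (e j) i ≠ y (e j + 1) i := by
    intro j
    have hm := hemem j
    rw [hfib, Finset.mem_filter, Finset.mem_range] at hm
    have hle : e j ≤ n * L := by omega
    exact ⟨hle, hm.2 ▸ hf (e j) hle⟩
  set g : Fin (L + 2) → ℕ := fun j =>
    if h : (j : ℕ) < L + 1 then e ⟨j, h⟩ else e ⟨L, by omega⟩ + 1 with hg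
  have hgcast : ∀ j : Fin (L + 1), g j.castSucc = e ⟨(j : ℕ), j.2⟩ := by
    intro j
    have hc : ((j.castSucc : Fin (L + 2)) : ℕ) < L + 1 := j.2
    simp only [hg, dif_pos hc]
    exact congrArg e (Fin.ext (Fin.coe_castSucc j))
  have hgstep : ∀ j : Fin (L + 1), g j.castSucc + 1 ≤ g j.succ := by
    intro j
    rw [hgcast j]
    by_cases h1 : (j : ℕ) + 1 < L + 1
    · have h2 : g j.succ = e ⟨(j : ℕ) + 1, h1⟩ := by
        simp only [hg]
        rw [dif_pos (show ((j.succ : Fin (L + 2)) : ℕ) < L + 1 from h1)]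
        exact congrArg e (Fin.ext (Fin.val_succ j))
      rw [h2]
      exact Nat.succ_le_of_lt (e.strictMono (by simp [Fin.lt_def]))
    · have hjL : (j : ℕ) = L := by omega
      have h2 : g j.succ = e ⟨L, by omega⟩ + 1 := by
        simp only [hg]
        rw [dif_neg (show ¬((j.succ : Fin (L + 2)) : ℕ) < L + 1 from by
          simp only [Fin.val_succ]; omega)]
      rw [h2]
      have h3 : (⟨(j : ℕ), j.2⟩ : Fin (L + 1)) = ⟨L, by omega⟩ := by simp [hjL]
      rw [h3]
  refine hchain ⟨fun j => y (g j) i, fun j => ?_⟩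
  have hstep := hgstep j
  constructor
  · exact hmono i _ _ (by omega)
  · intro heq
    have heq' : y (g j.castSucc) i = y (g j.succ) i := heq
    have hgc := hgcast j
    obtain ⟨hle, hne⟩ := hestrict ⟨(j : ℕ), j.2⟩
    obtain ⟨z2, hz2⟩ := hmono i (e ⟨(j : ℕ), j.2⟩ + 1) (g j.succ) (by omega)
    apply hne
    apply hord
    · exact hmono i _ _ (Nat.le_succ _)
    · exact ⟨z2, by rw [hz2, ← heq', hgc]⟩
end

section
/- For every L ≥ 1 there exists a naturally ordered commutative semiring whose natural order has longest chain of length L, and for each n an n×n matrix A over it, such that A^{(k)} ≠ A^{(k+1)} for all k < nL (up to a constant factor); i.e., convergence requires Ω(nL) steps. -/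
/-- `S` is naturally ordered: the relation `x ⪯ y ↔ ∃ z, x + z = y` is antisymmetric. -/
def NaturallyOrdered (S : Type*) [CommSemiring S] : Prop :=
  ∀ x y : S, (∃ z, x + z = y) → (∃ z, y + z = x) → x = y

/-- `S` has a chain of length `m` in its natural order: `m` consecutive strict steps. -/
def HasChainOfLength (S : Type*) [CommSemiring S] (m : ℕ) : Prop :=
  ∃ c : Fin (m + 1) → S, ∀ i : Fin m,
    (∃ z, c i.castSucc + z = c i.succ) ∧ c i.castSucc ≠ c i.succ

/-- Over `S`, for every `n ≥ 1` there is an `n × n` matrix whose partial geometric sums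
`A^{(m)} = Σ_{h=0}^m A^h` have not converged before `Ω(nL)` steps (with constant `c`). -/
def MatrixLowerBound (S : Type*) [CommSemiring S] (L c : ℕ) : Prop :=
  ∀ n : ℕ, 1 ≤ n → ∃ A : Matrix (Fin n) (Fin n) S, ∀ k : ℕ, c * (k + 1) ≤ n * L →
    (∑ h ∈ Finset.range (k + 1), A ^ h) ≠ (∑ h ∈ Finset.range (k + 2), A ^ h)

namespace LBAux

/-- Carrier: `{𝒪} ∪ {0, …, M}` encoded as `Option (Fin (M+1))`; `none` is the
additive identity `𝒪`, addition of numeric elements is `max`, multiplication is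
addition truncated at `M`. -/
abbrev S (M : ℕ) : Type := Option (Fin (M+1))

def sadd (M : ℕ) : S M → S M → S M :=
  fun x y => match x, y with
  | none, y => y
  | some a, none => some a
  | some a, some b => some ⟨max a.val b.val, by omega⟩

def smul (M : ℕ) : S M → S M → S M :=
  fun x y => match x, y with
  | none, _ => none
  | some _, none => none
  | some a, some b => some ⟨min (a.val + b.val) M, by omega⟩

lemma sadd_assoc (M : ℕ) (a b c : S M) :
    sadd M (sadd M a b) c = sadd M a (sadd M b c) := by
  cases a <;> cases b <;> cases c <;> simp only [sadd] <;>
    first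
      | rfl
      | exact congrArg some (Fin.ext (by simp only [Fin.val_mk]; omega))

lemma sadd_comm (M : ℕ) (a b : S M) : sadd M a b = sadd M b a := by
  cases a <;> cases b <;> simp only [sadd] <;>
    first
      | rfl
      | exact congrArg some (Fin.ext (by simp only [Fin.val_mk]; omega))

lemma smul_assoc' (M : ℕ) (a b c : S M) :
    smul M (smul M a b) c = smul M a (smul M b c) := by
  cases a <;> cases b <;> cases c <;> simp only [smul] <;>
    first
      | rfl
      | exact congrArg some (Fin.ext (by simp only [Fin.val_mk]; omega))

lemma smul_comm' (M : ℕ) (a b : S M) : smul M a b = smul M b a := by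
  cases a <;> cases b <;> simp only [smul] <;>
    first
      | rfl
      | exact congrArg some (Fin.ext (by simp only [Fin.val_mk]; omega))

lemma smul_one' (M : ℕ) (a : S M) : smul M a (some ⟨0, Nat.succ_pos M⟩) = a := by
  cases a with
  | none => rfl
  | some v =>
    have := v.isLt
    simp only [smul]
    exact congrArg some (Fin.ext (by simp only [Fin.val_mk]; omega))

lemma sdistrib (M : ℕ) (a b c : S M) :
    smul M a (sadd M b c) = sadd M (smul M a b) (smul M a c) := by
  cases a <;> cases b <;> cases c <;> simp only [smul, sadd] <;>
    first
      | rfl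
      | exact congrArg some (Fin.ext (by simp only [Fin.val_mk]; omega))

instance instAdd (M : ℕ) : Add (S M) := ⟨sadd M⟩
instance instZero (M : ℕ) : Zero (S M) := ⟨none⟩
instance instMul (M : ℕ) : Mul (S M) := ⟨smul M⟩
instance instOne (M : ℕ) : One (S M) := ⟨some ⟨0, Nat.succ_pos M⟩⟩

instance instCS (M : ℕ) : CommSemiring (S M) where
  nsmul := nsmulRec
  npow := npowRec
  add_assoc := sadd_assoc M
  add_comm := sadd_comm M
  zero_add := fun a => by cases a <;> rfl
  add_zero := fun a => by cases a <;> rfl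
  mul_assoc := smul_assoc' M
  mul_comm := smul_comm' M
  one_mul := fun a => (smul_comm' M _ _).trans (smul_one' M a)
  mul_one := smul_one' M
  zero_mul := fun a => by cases a <;> rfl
  mul_zero := fun a => by cases a <;> rfl
  left_distrib := sdistrib M
  right_distrib := fun a b c => by
    show smul M (sadd M a b) c = sadd M (smul M a c) (smul M b c)
    rw [smul_comm', sdistrib, smul_comm' M c a, smul_comm' M c b]

lemma add_def (M : ℕ) (x y : S M) : x + y = sadd M x y := rfl
lemma mul_def (M : ℕ) (x y : S M) : x * y = smul M x y := rfl
lemma zero_def (M : ℕ) : (0 : S M) = none := rfl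
lemma one_def (M : ℕ) : (1 : S M) = some ⟨0, Nat.succ_pos M⟩ := rfl

/-- valuation: `none ↦ 0`, `some a ↦ a+1`. -/
def V (M : ℕ) : S M → ℕ
  | none => 0
  | some a => a.val + 1

lemma V_add (M : ℕ) (x y : S M) : V M (x + y) = max (V M x) (V M y) := by
  cases x <;> cases y <;> simp [add_def, sadd, V] <;> omega

lemma V_inj (M : ℕ) {x y : S M} (h : V M x = V M y) : x = y := by
  cases x <;> cases y <;> simp [V] at h ⊢ <;>
    first | rfl | exact congrArg some (Fin.ext h) | exact Fin.ext h

lemma V_le (M : ℕ) (x : S M) : V M x ≤ M + 1 := by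
  cases x with
  | none => exact Nat.zero_le _
  | some v => have := v.isLt; simp [V]; omega

lemma V_sum_le (M : ℕ) {ι : Type*} (F : Finset ι) (f : ι → S M) (b : ℕ)
    (hb : ∀ x ∈ F, V M (f x) ≤ b) : V M (∑ x ∈ F, f x) ≤ b := by
  classical
  induction F using Finset.induction_on with
  | empty => simp [zero_def, V]
  | insert a s hx ih =>
    rw [Finset.sum_insert hx, V_add]
    exact max_le (hb a (Finset.mem_insert_self a s))
      (ih fun x hxs => hb x (Finset.mem_insert_of_mem hxs))

/-- The cycle matrix: edge `i → i+1 mod n`, with weight 1 on the wrap-around edge. -/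
def A (M n : ℕ) : Matrix (Fin n) (Fin n) (S M) :=
  fun i j => if ((i : ℕ) + 1) % n = (j : ℕ) then
    (some ⟨min (((i:ℕ) + 1)/n) M, by omega⟩) else 0

lemma div_succ_hi (n a : ℕ) (hn : 0 < n) (h : a % n = n - 1) :
    (a+1)/n = a/n + 1 ∧ (a+1) % n = 0 := by
  have hd := Nat.div_add_mod a n
  have h1 : a + 1 = n * (a/n + 1) := by rw [Nat.mul_succ]; omega
  constructor
  · rw [h1, Nat.mul_div_cancel_left _ hn]
  · rw [h1]; exact Nat.mul_mod_right n _

lemma div_succ_lo (n a : ℕ) (hn : 0 < n) (h : a % n ≠ n - 1) :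
    (a+1)/n = a/n ∧ (a+1) % n = a % n + 1 := by
  have hd := Nat.div_add_mod a n
  have hr : a % n < n := Nat.mod_lt _ hn
  have h1 : a + 1 = n * (a/n) + (a % n + 1) := by omega
  have h2 : a % n + 1 < n := by omega
  constructor
  · rw [h1, Nat.mul_add_div hn, Nat.div_eq_of_lt h2, Nat.add_zero]
  · rw [h1, Nat.mul_add_mod, Nat.mod_eq_of_lt h2]

lemma pow_apply (M n : ℕ) (hn : 0 < n) (h : ℕ) (i j : Fin n) :
    ((A M n) ^ h) i j =
      (if ((i:ℕ) + h) % n = (j:ℕ) then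
        some ⟨min (((i:ℕ)+h)/n) M, by omega⟩ else 0 : S M) := by
  induction h generalizing j with
  | zero =>
    have hi : ((i:ℕ) + 0) % n = (i:ℕ) := by
      simp [Nat.mod_eq_of_lt i.isLt]
    have h2 : ((i:ℕ))/n = 0 := Nat.div_eq_of_lt i.isLt
    rw [pow_zero, Matrix.one_apply]
    rcases eq_or_ne i j with rfl | hne
    · rw [if_pos rfl, if_pos (by rw [hi]), one_def]
      exact congrArg some (Fin.ext (by simp [h2]))
    · rw [if_neg hne, if_neg (fun hc => hne (Fin.ext (hi.symm.trans hc)))]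
  | succ h ih =>
    rw [pow_succ, Matrix.mul_apply]
    have hl0lt : ((i:ℕ) + h) % n < n := Nat.mod_lt _ hn
    rw [Finset.sum_eq_single (⟨((i:ℕ) + h) % n, hl0lt⟩ : Fin n)]
    · rw [ih ⟨((i:ℕ) + h) % n, hl0lt⟩, if_pos rfl]
      have hmod : (((i:ℕ) + h) % n + 1) % n = ((i:ℕ) + (h+1)) % n := by
        rw [Nat.mod_add_mod, Nat.add_assoc]
      by_cases hc : ((i:ℕ) + (h+1)) % n = (j:ℕ)
      · rw [show A M n ⟨((i:ℕ) + h) % n, hl0lt⟩ j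
              = some ⟨min ((((i:ℕ) + h) % n + 1)/n) M, by omega⟩ from
            if_pos (hmod.trans hc)]
        rw [if_pos hc, mul_def]
        simp only [smul]
        apply congrArg some (Fin.ext ?_)
        simp only [Fin.val_mk]
        have hadd : (i:ℕ) + (h+1) = ((i:ℕ) + h) + 1 := rfl
        rcases eq_or_ne (((i:ℕ) + h) % n) (n-1) with hr | hr
        · obtain ⟨hq, _⟩ := div_succ_hi n ((i:ℕ) + h) hn hr
          have hv : (((i:ℕ) + h) % n + 1)/n = 1 := by
            rw [hr, Nat.sub_add_cancel hn, Nat.div_self hn]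
          rw [hadd, hq, hv]
          generalize ((i:ℕ) + h)/n = q
          simp only [Nat.min_def]; split_ifs <;> omega
        · obtain ⟨hq, _⟩ := div_succ_lo n ((i:ℕ) + h) hn hr
          have hv : (((i:ℕ) + h) % n + 1)/n = 0 := Nat.div_eq_of_lt (by omega)
          rw [hadd, hq, hv]
          generalize ((i:ℕ) + h)/n = q
          simp only [Nat.min_def]; split_ifs <;> omega
      · rw [if_neg hc, show A M n ⟨((i:ℕ) + h) % n, hl0lt⟩ j = 0 from
            if_neg (fun hx => hc (hmod ▸ hx)), mul_zero]
    · intro b _ hb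
      rw [ih b, if_neg, zero_mul]
      intro hx
      exact hb (Fin.ext hx.symm)
    · intro hmem
      exact absurd (Finset.mem_univ _) hmem

lemma div_lt_div' (n h k : ℕ) (hn : 0 < n) (hlt : h < k) (hmod : h % n = k % n) :
    h / n < k / n := by
  have h1 := Nat.div_add_mod h n
  have h2 := Nat.div_add_mod k n
  have h3 : n * (h/n) < n * (k/n) := by omega
  exact Nat.lt_of_mul_lt_mul_left h3

def chainFun (M : ℕ) : Fin (M+2) → S M := fun i =>
  if _ : (i:ℕ) = 0 then none else some ⟨(i:ℕ) - 1, by omega⟩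

lemma chain_step (M : ℕ) (i : Fin (M+1)) :
    chainFun M i.castSucc + chainFun M i.succ = chainFun M i.succ ∧
      chainFun M i.castSucc ≠ chainFun M i.succ := by
  unfold chainFun
  simp only [Fin.coe_castSucc, Fin.val_succ]
  by_cases h0 : (i:ℕ) = 0
  · rw [dif_pos h0, dif_neg (by omega)]
    exact ⟨rfl, fun hc => by cases hc⟩
  · rw [dif_neg h0, dif_neg (by omega)]
    constructor
    · rw [add_def]
      simp only [sadd]
      exact congrArg some (Fin.ext (by simp only [Fin.val_mk]; omega))
    · intro hc
      have h2 := congrArg Fin.val (Option.some.inj hc)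
      simp only [Fin.val_mk] at h2
      omega

end LBAux

open LBAux in
/-- For every `L ≥ 1` there exists a naturally ordered commutative semiring whose natural
order has longest chain of length `L`, together with, for each `n`, an `n × n` matrix over it
requiring `Ω(nL)` steps to converge. -/
theorem naturally_ordered_lower_bound (L : ℕ) (hL : 1 ≤ L) :
    ∃ (S : Type) (inst : CommSemiring S) (c : ℕ), 0 < c ∧
      @NaturallyOrdered S inst ∧
      @HasChainOfLength S inst L ∧
      ¬ @HasChainOfLength S inst (L + 1) ∧
      @MatrixLowerBound S inst L c := by
  obtain ⟨M, rfl⟩ : ∃ M, L = M + 1 := ⟨L - 1, by omega⟩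
  refine ⟨S M, instCS M, 2, two_pos, ?_, ?_, ?_, ?_⟩
  · -- NaturallyOrdered
    rintro x y ⟨z, hz⟩ ⟨w, hw⟩
    apply V_inj M
    have h1 := congrArg (V M) hz; rw [V_add] at h1
    have h2 := congrArg (V M) hw; rw [V_add] at h2
    have h1' : V M x ≤ V M y := h1 ▸ le_max_left _ _
    have h2' : V M y ≤ V M x := h2 ▸ le_max_left _ _
    omega
  · -- chain of length L
    exact ⟨chainFun M, fun i => ((chain_step M i).imp (fun h => ⟨_, h⟩) id)⟩
  · -- no chain of length L + 1
    rintro ⟨c, hc⟩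
    have key : ∀ j : ℕ, ∀ hj : j < M + 3, j ≤ V M (c ⟨j, hj⟩) := by
      intro j
      induction j with
      | zero => intro _; exact Nat.zero_le _
      | succ j ihj =>
        intro hj
        have hj' : j < M + 2 := by omega
        have hj3 : j < M + 3 := by omega
        obtain ⟨⟨z, hz⟩, hne⟩ := hc ⟨j, hj'⟩
        have hcs : (Fin.castSucc (⟨j, hj'⟩ : Fin (M+2))) = (⟨j, hj3⟩ : Fin (M+3)) := rfl
        have hsc : (Fin.succ (⟨j, hj'⟩ : Fin (M+2))) = (⟨j+1, hj⟩ : Fin (M+3)) := rfl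
        rw [hcs, hsc] at hz hne
        have h1 := congrArg (V M) hz; rw [V_add] at h1
        have h1' : V M (c ⟨j, hj3⟩) ≤ V M (c ⟨j+1, hj⟩) := h1 ▸ le_max_left _ _
        have h2 : V M (c ⟨j, hj3⟩) ≠ V M (c ⟨j+1, hj⟩) := fun hh => hne (V_inj M hh)
        have h3 := ihj hj3
        omega
    have hlast := key (M+2) (by omega)
    have hle := V_le M (c ⟨M+2, by omega⟩)
    omega
  · -- matrix lower bound
    intro n hn
    have hn0 : 0 < n := hn
    refine ⟨A M n, ?_⟩
    intro k hk hEq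
    have hj0 : (k+1) % n < n := Nat.mod_lt _ hn0
    have hdm := Nat.div_add_mod (k+1) n
    have hqM : (k+1)/n ≤ M := by
      by_contra hcon
      push_neg at hcon
      have h2 : n * (M+1) ≤ n * ((k+1)/n) := Nat.mul_le_mul_left n (by omega)
      omega
    have hentry : (∑ h ∈ Finset.range (k+2), (A M n)^h) ⟨0, hn0⟩ ⟨(k+1)%n, hj0⟩
        = (∑ h ∈ Finset.range (k+1), (A M n)^h) ⟨0, hn0⟩ ⟨(k+1)%n, hj0⟩ := by rw [hEq]
    rw [Finset.sum_range_succ] at hentry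
    simp only [Matrix.sum_apply, Matrix.add_apply] at hentry
    have hpow : ((A M n)^(k+1)) (⟨0, hn0⟩ : Fin n) (⟨(k+1)%n, hj0⟩ : Fin n)
        = some ⟨min ((k+1)/n) M, by omega⟩ := by
      rw [pow_apply M n hn0]
      simp only [Fin.val_mk, Nat.zero_add]
      exact if_pos trivial
    rw [hpow] at hentry
    have hV := congrArg (V M) hentry
    rw [V_add] at hV
    have hVsome : V M (some ⟨min ((k+1)/n) M, by omega⟩ : S M) = min ((k+1)/n) M + 1 := rfl
    rw [hVsome, Nat.min_eq_left hqM] at hV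
    have hS1 : V M (∑ h ∈ Finset.range (k+1),
        ((A M n)^h) (⟨0, hn0⟩ : Fin n) (⟨(k+1)%n, hj0⟩ : Fin n)) ≤ (k+1)/n := by
      apply V_sum_le
      intro h hh
      rw [Finset.mem_range] at hh
      rw [pow_apply M n hn0]
      by_cases hcnd : (((⟨0, hn0⟩ : Fin n):ℕ) + h) % n = ((⟨(k+1)%n, hj0⟩ : Fin n):ℕ)
      · rw [if_pos hcnd]
        simp only [Fin.val_mk] at hcnd
        have hmod : h % n = (k+1) % n := by simpa using hcnd
        have hlt : h / n < (k+1)/n := div_lt_div' n h (k+1) hn0 (by omega) hmod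
        simp only [V, Fin.val_mk, Nat.zero_add]
        rcases Nat.le_total (h/n) M with hle | hle
        · rw [Nat.min_eq_left hle]; omega
        · rw [Nat.min_eq_right hle]; omega
      · rw [if_neg hcnd]
        simp [V, zero_def]
    have hge : (k+1)/n + 1 ≤ V M (∑ h ∈ Finset.range (k+1),
        ((A M n)^h) (⟨0, hn0⟩ : Fin n) (⟨(k+1)%n, hj0⟩ : Fin n)) :=
      hV ▸ le_max_right _ _
    omega
end

section
/- For any two finite multisets x, y of nonnegative extended reals and any p ≥ 0: min_p(min_p(x) ⊎ min_p(y)) = min_p(x ⊎ y), and min_p(min_p(x) + min_p(y)) = min_p(x + y). -/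
open scoped Classical ENNReal

/-- `min_p x`: the multiset of the `p+1` smallest elements of the multiset `x`
(all of `x` if `x` has at most `p+1` elements). -/
noncomputable def minp (p : ℕ) (x : Multiset ℝ≥0∞) : Multiset ℝ≥0∞ :=
  ((x.sort (· ≤ ·)).take (p + 1) : List ℝ≥0∞)

/-- `x + y` as bags: the multiset of all pairwise sums `u + v`, `u ∈ x`, `v ∈ y`. -/
noncomputable def bagSum (x y : Multiset ℝ≥0∞) : Multiset ℝ≥0∞ :=
  x.bind fun u => y.map (u + ·)

private lemma take_cons_of_sorted (a : ℝ≥0∞) :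
    ∀ (l : List ℝ≥0∞), (a :: l).Pairwise (· ≤ ·) → ∀ n, n ≤ (l.filter (· ≤ a)).length →
      (a :: l).take n = l.take n := by
  intro l
  induction l with
  | nil => intro _ n hn; simp at hn; simp [hn]
  | cons c l ih =>
    intro hs' n hn
    rw [List.pairwise_cons] at hs'
    obtain ⟨hsa, hs⟩ := hs'
    cases n with
    | zero => simp
    | succ m =>
      have hc : a ≤ c := hsa c List.mem_cons_self
      have hca : c ≤ a := by
        by_contra hca
        have : (c :: l).filter (· ≤ a) = [] := by
          rw [List.filter_eq_nil_iff]
          intro b hb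
          have : c ≤ b := by
            rcases List.mem_cons.1 hb with rfl | hb
            · exact le_refl _
            · exact (List.pairwise_cons.1 hs).1 b hb
          simp only [decide_eq_true_eq]
          exact fun h => hca (this.trans h)
        rw [this] at hn; simp at hn
      have hac : c = a := le_antisymm hca hc
      subst hac
      have hfil : (c :: l).filter (· ≤ c) = c :: l.filter (· ≤ c) := by
        simp [List.filter_cons]
      rw [hfil, List.length_cons] at hn
      have := ih hs m (Nat.le_of_succ_le_succ hn)
      simp only [List.take_succ_cons]
      rw [this]

private lemma take_orderedInsert (a : ℝ≥0∞) :
    ∀ (l : List ℝ≥0∞), l.Pairwise (· ≤ ·) → ∀ n, n ≤ (l.filter (· ≤ a)).length →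
      (l.orderedInsert (· ≤ ·) a).take n = l.take n := by
  intro l
  induction l with
  | nil => intro _ n hn; simp at hn; simp [hn]
  | cons b l ih =>
    intro hs n hn
    by_cases hab : a ≤ b
    · rw [List.orderedInsert_cons_of_le _ _ hab]
      refine take_cons_of_sorted a (b :: l) ?_ n hn
      rw [List.pairwise_cons]
      refine ⟨?_, hs⟩
      intro c hc
      rcases List.mem_cons.1 hc with rfl | hc
      · exact hab
      · exact hab.trans ((List.pairwise_cons.1 hs).1 c hc)
    · have hba : b ≤ a := le_of_not_ge hab
      have : (b :: l).orderedInsert (· ≤ ·) a = b :: l.orderedInsert (· ≤ ·) a := by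
        simp [List.orderedInsert, hab]
      rw [this]
      cases n with
      | zero => simp
      | succ m =>
        have hfil : (b :: l).filter (· ≤ a) = b :: l.filter (· ≤ a) := by
          simp [List.filter_cons, hba]
        rw [hfil, List.length_cons] at hn
        simp only [List.take_succ_cons]
        rw [ih (List.pairwise_cons.1 hs).2 m (Nat.le_of_succ_le_succ hn)]

private lemma minp_cons (p : ℕ) (a : ℝ≥0∞) (t : Multiset ℝ≥0∞)
    (h : p + 1 ≤ Multiset.card (t.filter (· ≤ a))) :
    minp p (a ::ₘ t) = minp p t := by
  have hsort : (a ::ₘ t).sort (· ≤ ·) = (t.sort (· ≤ ·)).orderedInsert (· ≤ ·) a := by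
    refine (fun hp h1 h2 => List.Perm.eq_of_pairwise' h1 h2 hp) ?_ (Multiset.pairwise_sort _ _) ?_
    · rw [← Multiset.coe_eq_coe]
      rw [Multiset.sort_eq]
      refine Eq.trans ?_ (Multiset.coe_eq_coe.2 (List.perm_orderedInsert _ a _)).symm
      rw [← Multiset.cons_coe, Multiset.sort_eq]
    · exact (Multiset.pairwise_sort t (· ≤ ·)).orderedInsert a _
  unfold minp
  rw [hsort]
  congr 1
  refine take_orderedInsert a _ (Multiset.pairwise_sort _ _) _ ?_
  have : ((t.sort (· ≤ ·)).filter (· ≤ a) : Multiset ℝ≥0∞) = t.filter (· ≤ a) := by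
    rw [← Multiset.filter_coe, Multiset.sort_eq]
  calc p + 1 ≤ Multiset.card (t.filter (· ≤ a)) := h
    _ = ((t.sort (· ≤ ·)).filter (· ≤ a)).length := by rw [← this, Multiset.coe_card]

private lemma minp_add_drop (p : ℕ) (s : Multiset ℝ≥0∞) :
    ∀ (d : Multiset ℝ≥0∞), (∀ a ∈ d, p + 1 ≤ Multiset.card (s.filter (· ≤ a))) →
      minp p (s + d) = minp p s := by
  intro d
  induction d using Multiset.induction with
  | empty => simp
  | cons a d ih =>
    intro h
    have h1 : s + a ::ₘ d = a ::ₘ (s + d) := by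
      rw [Multiset.add_cons]
    rw [h1, minp_cons]
    · exact ih fun b hb => h b (Multiset.mem_cons_of_mem hb)
    · calc p + 1 ≤ Multiset.card (s.filter (· ≤ a)) := h a (Multiset.mem_cons_self _ _)
        _ ≤ Multiset.card ((s + d).filter (· ≤ a)) :=
          Multiset.card_le_card (Multiset.filter_le_filter _ (Multiset.le_add_right _ _))

private lemma minp_structure (p : ℕ) (x : Multiset ℝ≥0∞) :
    ∃ d : Multiset ℝ≥0∞, x = minp p x + d ∧
      ∀ a ∈ d, p + 1 ≤ Multiset.card ((minp p x).filter (· ≤ a)) := by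
  refine ⟨((x.sort (· ≤ ·)).drop (p + 1) : List ℝ≥0∞), ?_, ?_⟩
  · unfold minp
    rw [show ((List.take (p+1) (x.sort (· ≤ ·)) : Multiset ℝ≥0∞) + (List.drop (p+1) (x.sort (· ≤ ·)) : Multiset ℝ≥0∞)) = (((x.sort (· ≤ ·)).take (p+1) ++ (x.sort (· ≤ ·)).drop (p+1) : List ℝ≥0∞) : Multiset ℝ≥0∞) from rfl, List.take_append_drop, Multiset.sort_eq]
  · intro a ha
    have ha' : a ∈ (x.sort (· ≤ ·)).drop (p + 1) := ha
    have hfull : ((x.sort (· ≤ ·)).take (p + 1)).length = p + 1 := by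
      rw [List.length_take]
      have : p + 1 < (x.sort (· ≤ ·)).length := by
        by_contra hlen
        push_neg at hlen
        rw [List.drop_eq_nil_of_le hlen] at ha'
        simp at ha'
      omega
    have hle : ∀ b ∈ (x.sort (· ≤ ·)).take (p + 1), b ≤ a := by
      intro b hb
      have hsort := Multiset.pairwise_sort x (· ≤ ·)
      have := List.pairwise_append.1 (by
        rw [List.take_append_drop]
        exact hsort : List.Pairwise (· ≤ ·) ((x.sort (· ≤ ·)).take (p + 1) ++ (x.sort (· ≤ ·)).drop (p + 1)))
      exact this.2.2 b hb a ha'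
    have : (minp p x).filter (· ≤ a) = minp p x := by
      rw [Multiset.filter_eq_self]
      intro b hb
      exact hle b hb
    rw [this]
    unfold minp
    rw [Multiset.coe_card, hfull]

private lemma card_minp_le (p : ℕ) (x : Multiset ℝ≥0∞) : Multiset.card (minp p x) ≤ p + 1 := by
  unfold minp
  rw [Multiset.coe_card]
  exact (List.length_take).le.trans (min_le_left _ _)

private lemma forall_le_of_filter (p : ℕ) (x : Multiset ℝ≥0∞) (a : ℝ≥0∞)
    (h : p + 1 ≤ Multiset.card ((minp p x).filter (· ≤ a))) :
    (∀ b ∈ minp p x, b ≤ a) ∧ Multiset.card (minp p x) = p + 1 := by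
  have hle : (minp p x).filter (· ≤ a) ≤ minp p x := Multiset.filter_le _ _
  have hcard : Multiset.card (minp p x) ≤ Multiset.card ((minp p x).filter (· ≤ a)) :=
    le_trans (card_minp_le p x) h
  have heq : (minp p x).filter (· ≤ a) = minp p x := Multiset.eq_of_le_of_card_le hle hcard
  constructor
  · intro b hb
    rw [← heq] at hb
    exact (Multiset.mem_filter.1 hb).2
  · exact le_antisymm (card_minp_le p x) (h.trans (Multiset.card_le_card hle))

private lemma map_le_bind {α β : Type*} (s : Multiset α) (f : α → β) (g : α → Multiset β)
    (h : ∀ a ∈ s, f a ∈ g a) : s.map f ≤ s.bind g := by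
  induction s using Multiset.induction with
  | empty => simp
  | cons a s ih =>
    rw [Multiset.map_cons, Multiset.cons_bind, ← Multiset.singleton_add]
    exact add_le_add (Multiset.singleton_le.2 (h a (Multiset.mem_cons_self _ _)))
      (ih fun b hb => h b (Multiset.mem_cons_of_mem hb))

private lemma minp_absorb (p : ℕ) (s y : Multiset ℝ≥0∞) :
    minp p (s + y) = minp p (s + minp p y) := by
  obtain ⟨d, hy, hd⟩ := minp_structure p y
  have e : s + y = (s + minp p y) + d := by
    conv_lhs => rw [hy]
    exact (add_assoc _ _ _).symm
  rw [e, minp_add_drop]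
  intro a ha
  calc p + 1 ≤ Multiset.card ((minp p y).filter (· ≤ a)) := hd a ha
    _ ≤ Multiset.card ((s + minp p y).filter (· ≤ a)) :=
      Multiset.card_le_card (Multiset.filter_le_filter _ (Multiset.le_add_left _ _))

private lemma bag_absorb_left (p : ℕ) (x y : Multiset ℝ≥0∞) :
    minp p (bagSum x y) = minp p (bagSum (minp p x) y) := by
  obtain ⟨d, hx, hd⟩ := minp_structure p x
  have e : bagSum x y = bagSum (minp p x) y + bagSum d y := by
    unfold bagSum
    conv_lhs => rw [hx]
    exact Multiset.add_bind _ _ _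
  rw [e, minp_add_drop]
  intro a ha
  obtain ⟨u, hu, ha⟩ := Multiset.mem_bind.1 ha
  obtain ⟨v, hv, rfl⟩ := Multiset.mem_map.1 ha
  obtain ⟨hball, hcard⟩ := forall_le_of_filter p x u (hd u hu)
  have hmap : (minp p x).map (· + v) ≤ (bagSum (minp p x) y).filter (· ≤ u + v) := by
    rw [Multiset.le_filter]
    constructor
    · exact map_le_bind _ _ _ fun b _ => Multiset.mem_map.2 ⟨v, hv, rfl⟩
    · intro b hb
      obtain ⟨c, hc, rfl⟩ := Multiset.mem_map.1 hb
      exact add_le_add_left (hball c hc) v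
  calc p + 1 = Multiset.card ((minp p x).map (· + v)) := by rw [Multiset.card_map, hcard]
    _ ≤ Multiset.card ((bagSum (minp p x) y).filter (· ≤ u + v)) := Multiset.card_le_card hmap

private lemma bag_absorb_right (p : ℕ) (x y : Multiset ℝ≥0∞) :
    minp p (bagSum x y) = minp p (bagSum x (minp p y)) := by
  obtain ⟨d, hy, hd⟩ := minp_structure p y
  have e : bagSum x y = bagSum x (minp p y) + x.bind (fun u => d.map (u + ·)) := by
    unfold bagSum
    conv_lhs => rw [hy]
    simp only [Multiset.map_add, Multiset.bind_add]
  rw [e, minp_add_drop]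
  intro a ha
  obtain ⟨u, hu, ha⟩ := Multiset.mem_bind.1 ha
  obtain ⟨v, hv, rfl⟩ := Multiset.mem_map.1 ha
  obtain ⟨hball, hcard⟩ := forall_le_of_filter p y v (hd v hv)
  have hmap : (minp p y).map (u + ·) ≤ (bagSum x (minp p y)).filter (· ≤ u + v) := by
    rw [Multiset.le_filter]
    constructor
    · exact (Multiset.le_bind x hu : (minp p y).map (u + ·) ≤ bagSum x (minp p y))
    · intro b hb
      obtain ⟨c, hc, rfl⟩ := Multiset.mem_map.1 hb
      exact add_le_add_right (hball c hc) u
  calc p + 1 = Multiset.card ((minp p y).map (u + ·)) := by rw [Multiset.card_map, hcard]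
    _ ≤ Multiset.card ((bagSum x (minp p y)).filter (· ≤ u + v)) := Multiset.card_le_card hmap

/-- For any finite multisets `x, y` of nonnegative extended reals and any `p ≥ 0`:
`min_p(min_p(x) ⊎ min_p(y)) = min_p(x ⊎ y)` and
`min_p(min_p(x) + min_p(y)) = min_p(x + y)` (pairwise sums). -/
theorem minp_identities (p : ℕ) (x y : Multiset ℝ≥0∞) :
    minp p (minp p x + minp p y) = minp p (x + y) ∧
    minp p (bagSum (minp p x) (minp p y)) = minp p (bagSum x y) := by
  constructor
  · have h1 : minp p (x + y) = minp p (minp p x + y) := by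
      rw [add_comm x y, minp_absorb, add_comm y (minp p x)]
    have h2 : minp p (minp p x + y) = minp p (minp p x + minp p y) := minp_absorb p _ y
    exact (h1.trans h2).symm
  · exact ((bag_absorb_left p x y).trans (bag_absorb_right p (minp p x) y)).symm
end
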